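/- Let Σ = {A_1, …, A_m} be a set of m real n×n matrices such that at most one of the matrices has rank greater than one (i.e., rank(A_i) ≤ 1 for all i except possibly one index). Then for every a ∈ ℝ^n and every natural number k, N_k(Σ, a) ≤ 1 + 2k(m−1). -/

import Mathlib

open Matrix Set

noncomputable section

-- auxiliary lemmas
lemma aux_ext_mono {n : ℕ} {B C : Set (Fin n → ℝ)} (hBC : B ⊆ C) {x : Fin n → ℝ}
    (hx : x ∈ Set.extremePoints ℝ C) (hxB : x ∈ B) : x ∈ Set.extremePoints ℝ B :=
  ⟨hxB, fun y hy z hz hseg => hx.2 (hBC hy) (hBC hz) hseg⟩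

lemma aux_km {n : ℕ} {X : Set (Fin n → ℝ)} (hX : X.Finite) :
    convexHull ℝ X = convexHull ℝ (Set.extremePoints ℝ (convexHull ℝ X)) := by
  have hfin : (Set.extremePoints ℝ (convexHull ℝ X)).Finite :=
    hX.subset extremePoints_convexHull_subset
  have h := closure_convexHull_extremePoints (hX.isCompact_convexHull ℝ) (convex_convexHull ℝ X)
  rw [(hfin.isClosed_convexHull (𝕜 := ℝ)).closure_eq] at h
  refine le_antisymm h.ge (convexHull_min extremePoints_subset
    (convex_convexHull ℝ X))

lemma aux_line {n : ℕ} {v : Fin n → ℝ} {T : Set (Fin n → ℝ)} (hT : T.Finite)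
    (hTv : ∀ x ∈ T, ∃ c : ℝ, x = c • v) :
    (Set.extremePoints ℝ (convexHull ℝ T)).ncard ≤ 2 := by
  by_cases hv : v = 0
  · subst hv
    have hT0 : T ⊆ {0} := fun x hx => by
      obtain ⟨c, rfl⟩ := hTv x hx; simp
    have : Set.extremePoints ℝ (convexHull ℝ T) ⊆ {0} :=
      extremePoints_convexHull_subset.trans hT0
    calc (Set.extremePoints ℝ (convexHull ℝ T)).ncard ≤ ({0} : Set (Fin n → ℝ)).ncard :=
          Set.ncard_le_ncard this (Set.finite_singleton 0)
      _ ≤ 2 := by simp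
  rcases T.eq_empty_or_nonempty with rfl | hne
  · simp
  have hinj : Function.Injective (fun c : ℝ => c • v) := smul_left_injective ℝ hv
  set C : Set ℝ := (fun c : ℝ => c • v) ⁻¹' T with hC
  have hCfin : C.Finite := hT.preimage (hinj.injOn)
  have hCne : C.Nonempty := by
    obtain ⟨x, hx⟩ := hne
    obtain ⟨c, rfl⟩ := hTv x hx
    exact ⟨c, hx⟩
  set F := hCfin.toFinset with hF
  have hFne : F.Nonempty := by simpa [hF] using hCne
  set cmin := F.min' hFne
  set cmax := F.max' hFne
  have hsub : Set.extremePoints ℝ (convexHull ℝ T) ⊆ {cmin • v, cmax • v} := by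
    intro x hx
    have hxT : x ∈ T := extremePoints_convexHull_subset hx
    obtain ⟨c, rfl⟩ := hTv x hxT
    have hcF : c ∈ F := by simpa [hF, hC] using hxT
    by_contra hcon
    simp only [Set.mem_insert_iff, Set.mem_singleton_iff] at hcon
    push_neg at hcon
    have hc1 : cmin < c := lt_of_le_of_ne (F.min'_le c hcF) (fun h => hcon.1 (by rw [← h]))
    have hc2 : c < cmax := lt_of_le_of_ne (F.le_max' c hcF) (fun h => hcon.2 (by rw [h]))
    have hd : (0:ℝ) < cmax - cmin := by linarith
    have hseg : c • v ∈ openSegment ℝ (cmin • v) (cmax • v) := by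
      refine ⟨(cmax - c)/(cmax - cmin), (c - cmin)/(cmax - cmin), div_pos (by linarith) hd, div_pos (by linarith) hd,
        by field_simp; ring, ?_⟩
      rw [smul_smul, smul_smul, ← add_smul]
      congr 1
      field_simp
      ring
    have hminT : cmin • v ∈ convexHull ℝ T := subset_convexHull ℝ T (by
      have : cmin ∈ C := by simpa [hF] using F.min'_mem hFne
      exact this)
    have hmaxT : cmax • v ∈ convexHull ℝ T := subset_convexHull ℝ T (by
      have : cmax ∈ C := by simpa [hF] using F.max'_mem hFne
      exact this)
    have := hx.2 hminT hmaxT hseg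
    exact (ne_of_lt hc1) (hinj this)
  calc (Set.extremePoints ℝ (convexHull ℝ T)).ncard ≤ ({cmin • v, cmax • v} : Set _).ncard :=
        Set.ncard_le_ncard hsub (by exact (Set.finite_singleton _).insert _)
    _ ≤ 2 := (Set.ncard_insert_le _ _).trans (by simp)

lemma aux_union_card {α : Type*} {ι : Type*} (s : Finset ι) (f : ι → Set α)
    (hf : ∀ i, (f i).Finite) : (⋃ i ∈ s, f i).ncard ≤ ∑ i ∈ s, (f i).ncard := by
  classical
  induction s using Finset.induction_on with
  | empty => simp
  | @insert a s ha ih =>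
    rw [Finset.set_biUnion_insert, Finset.sum_insert ha]
    exact (Set.ncard_union_le _ _).trans (by gcongr)

lemma aux_rank {n : ℕ} (M : Matrix (Fin n) (Fin n) ℝ) (h : M.rank ≤ 1) :
    ∃ v : Fin n → ℝ, ∀ x : Fin n → ℝ, ∃ c : ℝ, M.mulVec x = c • v := by
  rw [Matrix.rank] at h
  obtain ⟨v, hv⟩ := finrank_le_one_iff.1 h
  refine ⟨(v : Fin n → ℝ), fun x => ?_⟩
  have hx : M.mulVec x ∈ LinearMap.range M.mulVecLin := ⟨x, by simp⟩
  obtain ⟨c, hc⟩ := hv ⟨_, hx⟩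
  exact ⟨c, by simpa using congrArg Subtype.val hc.symm⟩


/-- `XSeq S a k` is the set of all vectors `T_{k-1} ⋯ T_0 · a` with each `T_j ∈ S`
(and `XSeq S a 0 = {a}`). -/
def XSeq {n : ℕ} (S : Set (Matrix (Fin n) (Fin n) ℝ)) (a : Fin n → ℝ) : ℕ → Set (Fin n → ℝ)
  | 0 => {a}
  | k + 1 => ⋃ A ∈ S, A.mulVec '' XSeq S a k

/-- `PHull S a k` is the convex hull of `XSeq S a k`. -/
def PHull {n : ℕ} (S : Set (Matrix (Fin n) (Fin n) ℝ)) (a : Fin n → ℝ) (k : ℕ) :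
    Set (Fin n → ℝ) :=
  convexHull ℝ (XSeq S a k)

/-- `EPts S a k` is the set of extreme points of `PHull S a k`. -/
def EPts {n : ℕ} (S : Set (Matrix (Fin n) (Fin n) ℝ)) (a : Fin n → ℝ) (k : ℕ) :
    Set (Fin n → ℝ) :=
  Set.extremePoints ℝ (PHull S a k)

/-- `NExt S a k` is the number of extreme points of `PHull S a k`. -/
def NExt {n : ℕ} (S : Set (Matrix (Fin n) (Fin n) ℝ)) (a : Fin n → ℝ) (k : ℕ) : ℕ :=
  (EPts S a k).ncard

/-- If at most one of the `m` matrices has rank greater than one, then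
`N_k(Σ, a) ≤ 1 + 2k(m-1)`. -/
theorem stmt3 {n m : ℕ} (A : Fin m → Matrix (Fin n) (Fin n) ℝ)
    (hrank : ∃ i₀ : Fin m, ∀ i : Fin m, i ≠ i₀ → (A i).rank ≤ 1)
    (a : Fin n → ℝ) (k : ℕ) :
    NExt (Set.range A) a k ≤ 1 + 2 * k * (m - 1) := by
  obtain ⟨i₀, hi₀⟩ := hrank
  set S := Set.range A with hS
  have hXfin : ∀ k, (XSeq S a k).Finite := by
    intro k
    induction k with
    | zero => exact Set.finite_singleton a
    | succ k ih => exact Set.Finite.biUnion (Set.finite_range A) (fun B _ => ih.image _)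
  have hEfin : ∀ k, (EPts S a k).Finite := fun k =>
    (hXfin k).subset extremePoints_convexHull_subset
  induction k with
  | zero =>
    have h0 : EPts S a 0 = {a} := by
      unfold EPts PHull XSeq
      rw [convexHull_singleton, extremePoints_singleton]
    simp [NExt, h0]
  | succ k ih =>
    set E : Fin m → Set (Fin n → ℝ) :=
      fun i => Set.extremePoints ℝ (convexHull ℝ ((A i).mulVec '' XSeq S a k)) with hE
    have hXsucc : XSeq S a (k+1) = ⋃ i, (A i).mulVec '' XSeq S a k := by
      show (⋃ B ∈ Set.range A, B.mulVec '' XSeq S a k) = _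
      rw [Set.biUnion_range]
    have hEi_fin : ∀ i, (E i).Finite := fun i =>
      ((hXfin k).image _).subset extremePoints_convexHull_subset
    have hsub : EPts S a (k+1) ⊆ ⋃ i ∈ Finset.univ, E i := by
      intro x hx
      have hxX : x ∈ XSeq S a (k+1) := extremePoints_convexHull_subset hx
      rw [hXsucc] at hxX
      obtain ⟨i, hi⟩ := Set.mem_iUnion.1 hxX
      refine Set.mem_biUnion (Finset.mem_univ i) ?_
      exact aux_ext_mono
        (convexHull_mono (by rw [hXsucc]; exact Set.subset_iUnion (fun j => (A j).mulVec '' XSeq S a k) i)) hx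
        (subset_convexHull _ _ hi)
    have hcard : NExt S a (k+1) ≤ ∑ i, (E i).ncard := by
      refine le_trans (Set.ncard_le_ncard hsub ?_) (aux_union_card Finset.univ E hEi_fin)
      exact Set.Finite.biUnion (Finset.univ : Finset (Fin m)).finite_toSet (fun i _ => hEi_fin i)
    have himg : ∀ s : Set (Fin n → ℝ), (A i₀).mulVec '' s = (A i₀).mulVecLin '' s :=
      fun s => Set.image_congr' (fun x => (Matrix.mulVecLin_apply (A i₀) x).symm)
    have hlin : convexHull ℝ ((A i₀).mulVec '' XSeq S a k)
        = convexHull ℝ ((A i₀).mulVec '' EPts S a k) := by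
      rw [himg, himg, ← LinearMap.image_convexHull, ← LinearMap.image_convexHull]
      congr 1
      exact aux_km (hXfin k)
    have hEi0 : (E i₀).ncard ≤ NExt S a k := by
      calc (E i₀).ncard
          ≤ ((A i₀).mulVec '' EPts S a k).ncard := by
            refine Set.ncard_le_ncard ?_ ((hEfin k).image _)
            rw [hE]
            simp only []
            rw [hlin]
            exact extremePoints_convexHull_subset
        _ ≤ (EPts S a k).ncard := Set.ncard_image_le (hEfin k)
    have hEi2 : ∀ i, i ≠ i₀ → (E i).ncard ≤ 2 := by
      intro i hi
      obtain ⟨v, hv⟩ := aux_rank (A i) (hi₀ i hi)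
      exact aux_line ((hXfin k).image _)
        (fun x hx => by obtain ⟨w, _, rfl⟩ := hx; exact hv w)
    have hsum : ∑ i, (E i).ncard ≤ NExt S a k + (m - 1) * 2 := by
      rw [← Finset.add_sum_erase Finset.univ (fun i => (E i).ncard) (Finset.mem_univ i₀)]
      refine add_le_add hEi0 ?_
      calc ∑ i ∈ Finset.univ.erase i₀, (E i).ncard
          ≤ ∑ _i ∈ Finset.univ.erase i₀, 2 :=
            Finset.sum_le_sum (fun i hi => hEi2 i (Finset.ne_of_mem_erase hi))
        _ = (m - 1) * 2 := by
            rw [Finset.sum_const, Finset.card_erase_of_mem (Finset.mem_univ i₀),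
              Finset.card_univ, Fintype.card_fin, smul_eq_mul]
    have hfin2 : NExt S a (k+1) ≤ NExt S a k + (m-1)*2 := hcard.trans hsum
    have h2 : 2 * (k+1) * (m-1) = 2*k*(m-1) + (m-1)*2 := by ring
    omega

end
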